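/- Let f : ℝⁿ → ℝ be convex and differentiable with ∇f L₁-Lipschitz continuous in the 1-norm, i.e., ‖∇f(x) − ∇f(y)‖∞ ≤ L₁‖x − y‖₁ for all x, y ∈ ℝⁿ. Then f(y) ≥ f(x) + ⟨∇f(x), y − x⟩ + (1/(2L₁))‖∇f(y) − ∇f(x)‖∞² for all x, y ∈ ℝⁿ. In particular, if x* is a minimizer of f, then ‖∇f(x)‖∞ ≤ √(2L₁(f(x) − f(x*))) for all x. -/

import Mathlib

open scoped RealInnerProductSpace

namespace OneNormAux
variable {n : ℕ}

lemma bdd (g : EuclideanSpace ℝ (Fin n)) : BddAbove (Set.range fun i => |g i|) :=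
  (Set.finite_range _).bddAbove

lemma abs_le_sup (g : EuclideanSpace ℝ (Fin n)) (i : Fin n) : |g i| ≤ ⨆ j, |g j| :=
  le_ciSup (bdd g) i

lemma sup_nonneg (g : EuclideanSpace ℝ (Fin n)) : 0 ≤ ⨆ j, |g j| := by
  rcases isEmpty_or_nonempty (Fin n) with h | h
  · simp [Real.iSup_of_isEmpty]
  · exact le_trans (abs_nonneg _) (abs_le_sup g h.some)

lemma inner_le_sup_mul_sum (g v : EuclideanSpace ℝ (Fin n)) :
    ⟪g, v⟫ ≤ (⨆ i, |g i|) * ∑ i, |v i| := by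
  rw [PiLp.inner_apply]
  simp only [RCLike.inner_apply, conj_trivial]
  rw [Finset.sum_congr rfl fun i _ => mul_comm (v i) (g i)]
  calc ∑ i, g i * v i ≤ ∑ i, (⨆ j, |g j|) * |v i| := by
        refine Finset.sum_le_sum fun i _ => ?_
        calc g i * v i ≤ |g i * v i| := le_abs_self _
          _ = |g i| * |v i| := abs_mul _ _
          _ ≤ (⨆ j, |g j|) * |v i| :=
              mul_le_mul_of_nonneg_right (abs_le_sup g i) (abs_nonneg _)
    _ = (⨆ j, |g j|) * ∑ i, |v i| := by rw [Finset.mul_sum]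

/-- gradient inequality for convex functions -/
lemma convex_grad_ineq (f : EuclideanSpace ℝ (Fin n) → ℝ)
    (hconv : ConvexOn ℝ Set.univ f)
    (f' : EuclideanSpace ℝ (Fin n) → EuclideanSpace ℝ (Fin n))
    (hf : ∀ x, HasGradientAt f (f' x) x)
    (x z : EuclideanSpace ℝ (Fin n)) :
    f x + ⟪f' x, z - x⟫ ≤ f z := by
  set g : ℝ → ℝ := fun t => f (x + t • (z - x)) with hg
  have hline : ∀ t : ℝ, HasDerivAt (fun s : ℝ => x + s • (z - x)) (z - x) t := by
    intro t
    simpa using ((hasDerivAt_id t).smul_const (z - x)).const_add x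
  have hgd : ∀ t : ℝ, HasDerivAt g ⟪f' (x + t • (z - x)), z - x⟫ t := by
    intro t
    have hF := (hasGradientAt_iff_hasFDerivAt.mp (hf (x + t • (z - x))))
    have := hF.comp_hasDerivAt t (hline t)
    simp [InnerProductSpace.toDual_apply_apply] at this
    exact this
  have hgc : ConvexOn ℝ Set.univ g := by
    let Lmap : ℝ →ᵃ[ℝ] EuclideanSpace ℝ (Fin n) := AffineMap.lineMap x z
    have h := hconv.comp_affineMap Lmap
    have h2 : (⇑Lmap ⁻¹' Set.univ) = Set.univ := by simp
    rw [h2] at h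
    have e : g = f ∘ ⇑Lmap := by
      funext t
      simp [hg, Lmap, AffineMap.lineMap_apply, add_comm]
    rw [e]; exact h
  have h01 : (0:ℝ) < 1 := one_pos
  have hslope := hgc.le_slope_of_hasDerivAt (Set.mem_univ 0) (Set.mem_univ 1) h01 (hgd 0)
  rw [slope_def_field] at hslope
  have h0 : g 0 = f x := by simp [hg]
  have h1 : g 1 = f z := by simp [hg]
  rw [h0, h1] at hslope
  simp only [zero_smul, add_zero] at hslope
  have : ⟪f' x, z - x⟫ ≤ f z - f x := by
    have := hslope
    field_simp at this
    linarith [this]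
  linarith

lemma descent (f : EuclideanSpace ℝ (Fin n) → ℝ)
    (f' : EuclideanSpace ℝ (Fin n) → EuclideanSpace ℝ (Fin n))
    (hf : ∀ x, HasGradientAt f (f' x) x)
    (L₁ : ℝ)
    (hlip : ∀ x y : EuclideanSpace ℝ (Fin n),
      (⨆ i, |f' x i - f' y i|) ≤ L₁ * ∑ i, |x i - y i|)
    (a b : EuclideanSpace ℝ (Fin n)) :
    f b ≤ f a + ⟪f' a, b - a⟫ + L₁ / 2 * (∑ i, |b i - a i|) ^ 2 := by
  set v : EuclideanSpace ℝ (Fin n) := b - a with hv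
  set c : ℝ := ∑ i, |v i| with hc
  have hc0 : 0 ≤ c := Finset.sum_nonneg fun i _ => abs_nonneg _
  set φ : ℝ → ℝ := fun t => L₁ * c ^ 2 * t ^ 2 / 2 + t * ⟪f' a, v⟫ + f a - f (a + t • v)
    with hφ
  set φ' : ℝ → ℝ := fun t => L₁ * c ^ 2 * t + ⟪f' a, v⟫ - ⟪f' (a + t • v), v⟫ with hφ'
  have hline : ∀ t : ℝ, HasDerivAt (fun s : ℝ => a + s • v) v t := fun t => by
    simpa using ((hasDerivAt_id t).smul_const v).const_add a
  have hcomp : ∀ t : ℝ, HasDerivAt (fun s => f (a + s • v)) ⟪f' (a + t • v), v⟫ t := by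
    intro t
    have hF := (hasGradientAt_iff_hasFDerivAt.mp (hf (a + t • v)))
    have := hF.comp_hasDerivAt t (hline t)
    simp [InnerProductSpace.toDual_apply_apply] at this
    exact this
  have hder : ∀ t : ℝ, HasDerivAt φ (φ' t) t := by
    intro t
    have h1 : HasDerivAt (fun s : ℝ => L₁ * c ^ 2 * s ^ 2 / 2 + s * ⟪f' a, v⟫ + f a)
        (L₁ * c ^ 2 * t + ⟪f' a, v⟫) t := by
      have hp : HasDerivAt (fun s : ℝ => L₁ * c ^ 2 * s ^ 2 / 2)
          (L₁ * c ^ 2 * t) t := by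
        have := ((hasDerivAt_pow 2 t).const_mul (L₁ * c ^ 2)).div_const 2
        exact this.congr_deriv (by rw [show (2:ℕ) - 1 = 1 from rfl]; push_cast; ring)
      have hq : HasDerivAt (fun s : ℝ => s * ⟪f' a, v⟫) ⟪f' a, v⟫ t := by
        simpa using (hasDerivAt_id t).mul_const (⟪f' a, v⟫)
      simpa using (hp.add hq).add_const (f a)
    exact h1.sub (hcomp t)
  have hmono : MonotoneOn φ (Set.Icc 0 1) := by
    apply monotoneOn_of_hasDerivWithinAt_nonneg (convex_Icc 0 1)
      (fun t _ => (hder t).continuousAt.continuousWithinAt)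
      (fun t ht => (hder t).hasDerivWithinAt)
    intro t ht
    rw [interior_Icc] at ht
    have ht0 : 0 ≤ t := le_of_lt ht.1
    have key : ⟪f' (a + t • v), v⟫ - ⟪f' a, v⟫ ≤ L₁ * c ^ 2 * t := by
      rw [← inner_sub_left]
      calc ⟪f' (a + t • v) - f' a, v⟫
          ≤ (⨆ i, |(f' (a + t • v) - f' a) i|) * ∑ i, |v i| := inner_le_sup_mul_sum _ _
        _ ≤ (L₁ * ∑ i, |(a + t • v) i - a i|) * c := by
            refine mul_le_mul_of_nonneg_right ?_ hc0
            have hsupeq : (⨆ i, |(f' (a + t • v) - f' a) i|)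
                = ⨆ i, |f' (a + t • v) i - f' a i| := by
              norm_num [PiLp.sub_apply]
            rw [hsupeq]
            exact hlip _ _
        _ = L₁ * c ^ 2 * t := by
            have habs : ∀ i, |(a + t • v) i - a i| = t * |v i| := by
              intro i
              simp [abs_mul, abs_of_nonneg ht0]
            rw [Finset.sum_congr rfl fun i _ => habs i, ← Finset.mul_sum, ← hc]
            ring
    simp only [hφ']
    linarith
  have h01 := hmono (Set.mem_Icc.mpr ⟨le_refl 0, zero_le_one⟩)
    (Set.mem_Icc.mpr ⟨zero_le_one, le_refl 1⟩) zero_le_one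
  have hφ0 : φ 0 = 0 := by simp [hφ]
  have hab : a + v = b := by simp [hv]
  have hφ1 : φ 1 = L₁ * c ^ 2 / 2 + ⟪f' a, v⟫ + f a - f b := by
    simp [hφ, hab]
  rw [hφ0, hφ1] at h01
  have hceq : (∑ i, |b i - a i|) = c := by
    rw [hc]; norm_num [hv, PiLp.sub_apply]
  rw [hceq]
  linarith

end OneNormAux

open OneNormAux in
/-- for a convex function with `L₁`-Lipschitz gradient in the
1-norm, the co-coercivity-type lower bound holds, and at a minimizer `x*` we
get `‖∇f(x)‖∞ ≤ √(2L₁(f(x) − f(x*)))`. -/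
theorem one_norm_lipschitz_lower_bound {n : ℕ}
    (f : EuclideanSpace ℝ (Fin n) → ℝ)
    (hconv : ConvexOn ℝ Set.univ f)
    (f' : EuclideanSpace ℝ (Fin n) → EuclideanSpace ℝ (Fin n))
    (hf : ∀ x, HasGradientAt f (f' x) x)
    (L₁ : ℝ) (hL₁ : 0 < L₁)
    (hlip : ∀ x y : EuclideanSpace ℝ (Fin n),
      (⨆ i, |f' x i - f' y i|) ≤ L₁ * ∑ i, |x i - y i|) :
    (∀ x y : EuclideanSpace ℝ (Fin n),
      f y ≥ f x + ⟪f' x, y - x⟫ + 1 / (2 * L₁) * (⨆ i, |f' y i - f' x i|) ^ 2) ∧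
    (∀ xs : EuclideanSpace ℝ (Fin n), (∀ y, f xs ≤ f y) →
      ∀ x, (⨆ i, |f' x i|) ≤ Real.sqrt (2 * L₁ * (f x - f xs))) := by
  have key : ∀ x y : EuclideanSpace ℝ (Fin n),
      f y ≥ f x + ⟪f' x, y - x⟫ + 1 / (2 * L₁) * (⨆ i, |f' y i - f' x i|) ^ 2 := by
    intro x y
    -- the shifted function F and its gradient F'
    set F : EuclideanSpace ℝ (Fin n) → ℝ := fun z => f z - ⟪f' x, z⟫ with hF
    set F' : EuclideanSpace ℝ (Fin n) → EuclideanSpace ℝ (Fin n) :=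
      fun z => f' z - f' x with hF'
    have hFgrad : ∀ z, HasGradientAt F (F' z) z := by
      intro z
      rw [hasGradientAt_iff_hasFDerivAt]
      have h1 := hasGradientAt_iff_hasFDerivAt.mp (hf z)
      have h2 : HasFDerivAt (fun w : EuclideanSpace ℝ (Fin n) => ⟪f' x, w⟫)
          ((InnerProductSpace.toDual ℝ _) (f' x) : EuclideanSpace ℝ (Fin n) →L[ℝ] ℝ) z := by
        exact ((InnerProductSpace.toDual ℝ _) (f' x)).hasFDerivAt.congr_fderiv rfl
      have := h1.sub h2
      exact this.congr_fderiv (by simp [hF', map_sub])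
    have hFconv : ConvexOn ℝ Set.univ F := by
      refine ⟨convex_univ, ?_⟩
      intro p _ q _ a b ha hb hab
      have h1 := hconv.2 (Set.mem_univ p) (Set.mem_univ q) ha hb hab
      simp only [hF, smul_eq_mul]
      have : ⟪f' x, a • p + b • q⟫ = a * ⟪f' x, p⟫ + b * ⟪f' x, q⟫ := by
        rw [inner_add_right, real_inner_smul_right, real_inner_smul_right]
      rw [this]
      simp only [smul_eq_mul] at h1
      linarith
    have hFlip : ∀ a b : EuclideanSpace ℝ (Fin n),
        (⨆ i, |F' a i - F' b i|) ≤ L₁ * ∑ i, |a i - b i| := by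
      intro a b
      have heq : (⨆ i, |F' a i - F' b i|) = ⨆ i, |f' a i - f' b i| := by
        refine iSup_congr fun i => ?_
        have : F' a i - F' b i = f' a i - f' b i := by
          simp only [hF', PiLp.sub_apply]; ring
        rw [this]
      rw [heq]; exact hlip a b
    -- x minimizes F
    have hmin : ∀ z, F x ≤ F z := by
      intro z
      have := convex_grad_ineq F hFconv F' hFgrad x z
      have h0 : F' x = 0 := by simp [hF']
      rw [h0] at this
      simpa using this
    -- the supremum
    set s : ℝ := ⨆ i, |f' y i - f' x i| with hs
    have hs0 : 0 ≤ s := by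
      have h : (⨆ i, |F' y i|) = s := iSup_congr fun i => by
        simp [hF', PiLp.sub_apply]
      rw [← h]
      exact sup_nonneg _
    rcases eq_or_lt_of_le hs0 with hzero | hpos
    · -- s = 0 : just the gradient inequality
      have := convex_grad_ineq f hconv f' hf x y
      rw [← hzero]
      simpa using this
    · -- s > 0
      rcases isEmpty_or_nonempty (Fin n) with hem | hne
      · exfalso
        rw [hs, Real.iSup_of_isEmpty] at hpos
        exact lt_irrefl 0 hpos
      obtain ⟨i₀, -, hi₀⟩ := Finset.exists_max_image Finset.univ
        (fun i => |f' y i - f' x i|) ⟨hne.some, Finset.mem_univ _⟩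
      have hsup_eq : s = |f' y i₀ - f' x i₀| := by
        rw [hs]
        refine le_antisymm ?_ ?_
        · exact ciSup_le fun i => hi₀ i (Finset.mem_univ i)
        · exact le_ciSup (f := fun i => |f' y i - f' x i|) ((Set.finite_range _).bddAbove) i₀
      set g0 : ℝ := f' y i₀ - f' x i₀ with hg0
      set σ : ℝ := if 0 ≤ g0 then 1 else -1 with hσdef
      have habsσ : |σ| = 1 := by
        rw [hσdef]; split_ifs <;> simp
      have hσg : σ * g0 = |g0| := by
        rw [hσdef]; split_ifs with h
        · rw [abs_of_nonneg h]; ring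
        · rw [abs_of_neg (lt_of_not_ge h)]; ring
      set v : EuclideanSpace ℝ (Fin n) := EuclideanSpace.single i₀ σ with hvdef
      have hvap : ∀ i, v i = if i = i₀ then σ else 0 := by
        intro i; rw [hvdef]; exact EuclideanSpace.single_apply i₀ σ i
      have hsumv : (∑ i, |v i|) = 1 := by
        rw [Finset.sum_eq_single i₀]
        · rw [hvap]; simp [habsσ]
        · intro i _ hi; rw [hvap]; simp [hi]
        · simp
      have hinner : ⟪F' y, v⟫ = s := by
        rw [PiLp.inner_apply]
        simp only [RCLike.inner_apply, conj_trivial]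
        rw [Finset.sum_eq_single i₀]
        · have h3 : F' y i₀ = g0 := by simp [hF', PiLp.sub_apply, hg0]
          rw [h3, hvap]
          simp only [if_pos rfl, eq_self_iff_true, if_true]
          linarith [hσg, hsup_eq]
        · intro i _ hi; rw [hvap]; simp [hi]
        · simp
      set z : EuclideanSpace ℝ (Fin n) := y + (-(s / L₁)) • v with hzdef
      have hdesc := descent F F' hFgrad L₁ hFlip y z
      have hzy : z - y = (-(s / L₁)) • v := by rw [hzdef]; abel
      have hin2 : ⟪F' y, z - y⟫ = -(s / L₁) * s := by
        rw [hzy, real_inner_smul_right, hinner]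
      have hsum2 : (∑ i, |z i - y i|) = s / L₁ := by
        have : ∀ i, |z i - y i| = (s / L₁) * |v i| := by
          intro i
          have : z i - y i = (-(s / L₁)) * v i := by
            rw [hzdef]; simp
          rw [this, abs_mul, abs_neg, abs_of_nonneg (by positivity : (0:ℝ) ≤ s / L₁)]
        rw [Finset.sum_congr rfl fun i _ => this i, ← Finset.mul_sum, hsumv, mul_one]
      rw [hin2, hsum2] at hdesc
      have hxz := hmin z
      have hFx : F x = f x - ⟪f' x, x⟫ := rfl
      have hFy : F y = f y - ⟪f' x, y⟫ := rfl
      have hiysub : ⟪f' x, y - x⟫ = ⟪f' x, y⟫ - ⟪f' x, x⟫ := inner_sub_right _ _ _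
      have halg : -(s / L₁) * s + L₁ / 2 * (s / L₁) ^ 2 = -(1 / (2 * L₁) * s ^ 2) := by
        field_simp
        ring
      rw [hiysub]
      rw [hFx] at hxz
      rw [hFy] at hdesc
      nlinarith [hxz.trans hdesc, halg]
  refine ⟨key, ?_⟩
  intro xs hminf x
  have hloc : IsLocalMin f xs := Filter.Eventually.of_forall hminf
  have h0 : f' xs = 0 := by
    have h := hloc.hasFDerivAt_eq_zero (hasGradientAt_iff_hasFDerivAt.mp (hf xs))
    have h2 := congrArg (InnerProductSpace.toDual ℝ (EuclideanSpace ℝ (Fin n))).symm h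
    simpa using h2
  have h1 := key xs x
  rw [h0] at h1
  simp only [inner_zero_left, add_zero] at h1
  have hsupeq : (⨆ i, |f' x i - (0 : EuclideanSpace ℝ (Fin n)) i|) = ⨆ i, |f' x i| :=
    iSup_congr fun i => by simp
  rw [hsupeq] at h1
  set s : ℝ := ⨆ i, |f' x i| with hs
  have hs0 : 0 ≤ s := sup_nonneg _
  have h1' : f xs + 1 / (2 * L₁) * s ^ 2 ≤ f x := by linarith [h1]
  have hts : 2 * L₁ * (1 / (2 * L₁) * s ^ 2) = s ^ 2 := by field_simp
  have hsq : s ^ 2 ≤ 2 * L₁ * (f x - f xs) := by nlinarith [h1', hL₁, sq_nonneg s]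
  have hy0 : 0 ≤ 2 * L₁ * (f x - f xs) := le_trans (sq_nonneg s) hsq
  rw [Real.le_sqrt hs0 hy0]
  exact hsq
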